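/- Charnes–Cooper transformation: Minimizing ζ(x) = (a·x + q)/(c·x + d) over Ω = {x : Ax ≤ C, x ≥ 0} with c·x + d > 0 on Ω is equivalent to the linear program: minimize a·y + q·s subject to A y ≤ C s, c·y + d·s = 1, y ≥ 0, s > 0; specifically, x ↦ (x/(c·x+d), 1/(c·x+d)) and (y,s) ↦ y/s are mutually inverse bijections between the feasible sets that preserve objective values. -/

import Mathlib

/-- Charnes–Cooper transformation: `x ↦ (x/(c·x+d), 1/(c·x+d))` and `(y,s) ↦ y/s` are
mutually inverse bijections between the fractional program's feasible set `Ω` and the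
linear program's feasible set `Λ`, preserving objective values. -/
theorem charnes_cooper_transformation (n m : ℕ)
    (A : Fin m → Fin n → ℝ) (C : Fin m → ℝ)
    (a c : Fin n → ℝ) (q d : ℝ)
    (Ωs : Set (Fin n → ℝ))
    (hΩ : Ωs = {x | (∀ i, (∑ j, A i j * x j) ≤ C i) ∧ ∀ j, 0 ≤ x j})
    (hne : Ωs.Nonempty) (hbd : Bornology.IsBounded Ωs)
    (hpos : ∀ x ∈ Ωs, 0 < (∑ j, c j * x j) + d)
    (Λ : Set ((Fin n → ℝ) × ℝ))
    (hΛ : Λ = {ys | (∀ i, (∑ j, A i j * ys.1 j) ≤ C i * ys.2) ∧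
      ((∑ j, c j * ys.1 j) + d * ys.2 = 1) ∧ (∀ j, 0 ≤ ys.1 j) ∧ 0 < ys.2}) :
    (∀ x ∈ Ωs,
      ((fun j => x j / ((∑ k, c k * x k) + d)), 1 / ((∑ k, c k * x k) + d)) ∈ Λ ∧
      (fun j => (x j / ((∑ k, c k * x k) + d)) / (1 / ((∑ k, c k * x k) + d))) = x ∧
      (∑ j, a j * (x j / ((∑ k, c k * x k) + d))) + q * (1 / ((∑ k, c k * x k) + d))
        = ((∑ j, a j * x j) + q) / ((∑ j, c j * x j) + d)) ∧
    (∀ ys ∈ Λ,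
      (fun j => ys.1 j / ys.2) ∈ Ωs ∧
      ((fun j => (ys.1 j / ys.2) / ((∑ k, c k * (ys.1 k / ys.2)) + d)),
        1 / ((∑ k, c k * (ys.1 k / ys.2)) + d)) = ys ∧
      ((∑ j, a j * (ys.1 j / ys.2)) + q) / ((∑ j, c j * (ys.1 j / ys.2)) + d)
        = (∑ j, a j * ys.1 j) + q * ys.2) := by
  subst hΩ hΛ
  constructor
  · intro x hx
    obtain ⟨hA, hx0⟩ := hx
    have ht : 0 < (∑ k, c k * x k) + d := hpos x ⟨hA, hx0⟩
    set t := (∑ k, c k * x k) + d with htdef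
    have htne : t ≠ 0 := ne_of_gt ht
    refine ⟨⟨?_, ?_, ?_, ?_⟩, ?_, ?_⟩
    · intro i
      have : (∑ j, A i j * (x j / t)) = (∑ j, A i j * x j) / t := by
        rw [Finset.sum_div]; congr 1; ext j; ring
      rw [this]
      rw [div_le_iff₀ ht]
      calc (∑ j, A i j * x j) ≤ C i := hA i
        _ = C i * (1/t) * t := by field_simp
    · have : (∑ j, c j * (x j / t)) = (∑ j, c j * x j) / t := by
        rw [Finset.sum_div]; congr 1; ext j; ring
      rw [this]
      field_simp
      exact htdef.symm
    · intro j; exact div_nonneg (hx0 j) ht.le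
    · positivity
    · funext j; field_simp
    · have : (∑ j, a j * (x j / t)) = (∑ j, a j * x j) / t := by
        rw [Finset.sum_div]; congr 1; ext j; ring
      rw [this]
      field_simp
  · intro ys hys
    obtain ⟨hA, hcd, hy0, hs⟩ := hys
    have hsne : ys.2 ≠ 0 := ne_of_gt hs
    have hxΩ : (fun j => ys.1 j / ys.2) ∈
        {x | (∀ i, (∑ j, A i j * x j) ≤ C i) ∧ ∀ j, 0 ≤ x j} := by
      refine ⟨fun i => ?_, fun j => div_nonneg (hy0 j) hs.le⟩
      have : (∑ j, A i j * (ys.1 j / ys.2)) = (∑ j, A i j * ys.1 j) / ys.2 := by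
        rw [Finset.sum_div]; congr 1; ext j; ring
      rw [this, div_le_iff₀ hs]
      exact hA i
    have hsum : (∑ k, c k * (ys.1 k / ys.2)) + d = 1 / ys.2 := by
      have h1 : (∑ k, c k * (ys.1 k / ys.2)) = (∑ k, c k * ys.1 k) / ys.2 := by
        rw [Finset.sum_div]; congr 1; ext k; ring
      rw [h1]
      field_simp
      linarith [hcd]
    refine ⟨hxΩ, ?_, ?_⟩
    · rw [hsum]
      have h1 : (fun j => ys.1 j / ys.2 / (1 / ys.2)) = ys.1 := by
        funext j; field_simp
      have h2 : 1 / (1 / ys.2) = ys.2 := by field_simp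
      exact Prod.ext h1 h2
    · rw [hsum]
      have h2 : (∑ j, a j * (ys.1 j / ys.2)) = (∑ j, a j * ys.1 j) / ys.2 := by
        rw [Finset.sum_div]; congr 1; ext j; ring
      rw [h2]
      field_simp
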